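/- For the pressure and tangential-velocity boundary scheme, for any real j_y the vector m₀ = (ρ₀, J_x⁰, j_y, α λ² ρ₀, 0, 0, −λ² J_x⁰, −λ² j_y, β λ⁴ ρ₀)ᵗ satisfies K m₀ = M ξ₀, where ξ₀ = (0, 0, (−α − 2β + 4)ρ₀/18, 0, 0, J_x⁰/(6λ), −J_x⁰/(6λ), 0, 0)ᵗ; the family of solutions is parametrized by the kernel direction κ_y. -/
import Mathlib


open Matrix

noncomputable section

/-- D2Q9 moment matrix (equation 5). -/
def Md (l : ℝ) : Matrix (Fin 9) (Fin 9) ℝ :=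
  !![1, 1, 1, 1, 1, 1, 1, 1, 1;
     0, l, 0, -l, 0, l, -l, -l, l;
     0, 0, l, 0, -l, l, l, -l, -l;
     -4*l^2, -l^2, -l^2, -l^2, -l^2, 2*l^2, 2*l^2, 2*l^2, 2*l^2;
     0, l^2, -l^2, l^2, -l^2, 0, 0, 0, 0;
     0, 0, 0, 0, 0, l^2, -l^2, l^2, -l^2;
     0, -2*l^3, 0, 2*l^3, 0, l^3, -l^3, -l^3, l^3;
     0, 0, -2*l^3, 0, 2*l^3, l^3, l^3, -l^3, -l^3;
     4*l^4, -2*l^4, -2*l^4, -2*l^4, -2*l^4, l^4, l^4, l^4, l^4]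

/-- Fluid collision matrix (equation 14). -/
def Cfl (l a b se sx sq sd : ℝ) : Matrix (Fin 9) (Fin 9) ℝ :=
  !![1, 0, 0, 0, 0, 0, 0, 0, 0;
     0, 1, 0, 0, 0, 0, 0, 0, 0;
     0, 0, 1, 0, 0, 0, 0, 0, 0;
     a*se*l^2, 0, 0, 1 - se, 0, 0, 0, 0, 0;
     0, 0, 0, 0, 1 - sx, 0, 0, 0, 0;
     0, 0, 0, 0, 0, 1 - sx, 0, 0, 0;
     0, -sq*l^2, 0, 0, 0, 0, 1 - sq, 0, 0;
     0, 0, -sq*l^2, 0, 0, 0, 0, 1 - sq, 0;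
     b*sd*l^4, 0, 0, 0, 0, 0, 0, 0, 1 - sd]

/-- Matrix U (equation 21): diagonal 0/1 with ones at positions 0,1,3,4,7,8. -/
def Ub : Matrix (Fin 9) (Fin 9) ℝ :=
  !![1, 0, 0, 0, 0, 0, 0, 0, 0;
     0, 1, 0, 0, 0, 0, 0, 0, 0;
     0, 0, 0, 0, 0, 0, 0, 0, 0;
     0, 0, 0, 1, 0, 0, 0, 0, 0;
     0, 0, 0, 0, 1, 0, 0, 0, 0;
     0, 0, 0, 0, 0, 0, 0, 0, 0;
     0, 0, 0, 0, 0, 0, 0, 0, 0;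
     0, 0, 0, 0, 0, 0, 0, 1, 0;
     0, 0, 0, 0, 0, 0, 0, 0, 1]

/-- Pressure / tangential velocity interaction matrix T (equation 39). -/
def Tpv : Matrix (Fin 9) (Fin 9) ℝ :=
  !![0, 0, 0, 0, 0, 0, 0, 0, 0;
     0, 0, 0, 0, 0, 0, 0, 0, 0;
     0, 0, 0, 0, -1, 0, 0, 0, 0;
     0, 0, 0, 0, 0, 0, 0, 0, 0;
     0, 0, 0, 0, 0, 0, 0, 0, 0;
     0, 0, (1:ℝ)/6, 0, -(1:ℝ)/6, (1:ℝ)/6, (1:ℝ)/6, (5:ℝ)/6, -(1:ℝ)/6;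
     0, 0, (1:ℝ)/6, 0, -(1:ℝ)/6, (1:ℝ)/6, (1:ℝ)/6, -(1:ℝ)/6, (5:ℝ)/6;
     0, 0, 0, 0, 0, 0, 0, 0, 0;
     0, 0, 0, 0, 0, 0, 0, 0, 0]

/-- Pressure and tangential velocity boundary matrix K (equation 40). -/
def Kpv (l a b se sx sq sd : ℝ) : Matrix (Fin 9) (Fin 9) ℝ :=
  1 - Md l * (Tpv + Ub) * (Md l)⁻¹ * Cfl l a b se sx sq sd

lemma Fin.sum_univ_nine {β : Type*} [AddCommMonoid β] (f : Fin 9 → β) :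
    ∑ i, f i = f 0 + f 1 + f 2 + f 3 + f 4 + f 5 + f 6 + f 7 + f 8 := by
  rw [Fin.sum_univ_castSucc, Fin.sum_univ_eight]
  rfl

@[simp] lemma cons_val_five' {α : Type*} (x : α) (u : Fin 8 → α) :
    Matrix.vecCons x u 5 = vecHead (vecTail (vecTail (vecTail (vecTail u)))) := rfl
@[simp] lemma cons_val_six' {α : Type*} (x : α) (u : Fin 8 → α) :
    Matrix.vecCons x u 6 = vecHead (vecTail (vecTail (vecTail (vecTail (vecTail u))))) := rfl
@[simp] lemma cons_val_seven' {α : Type*} (x : α) (u : Fin 8 → α) :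
    Matrix.vecCons x u 7 =
      vecHead (vecTail (vecTail (vecTail (vecTail (vecTail (vecTail u)))))) := rfl
@[simp] lemma cons_val_eight' {α : Type*} (x : α) (u : Fin 8 → α) :
    Matrix.vecCons x u 8 =
      vecHead (vecTail (vecTail (vecTail (vecTail (vecTail (vecTail (vecTail u))))))) := rfl

/-- `36 l⁴` times the inverse of the moment matrix (polynomial entries). -/
def Nm (l : ℝ) : Matrix (Fin 9) (Fin 9) ℝ :=
  !![4*l^4, 0, 0, (-4)*(l^2), 0, 0, 0, 0, (4)*(1);
     4*l^4, 6*l^3, 0, (-1)*(l^2), 9*l^2, 0, (-2)*(3*l), 0, (-2)*(1);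
     4*l^4, 0, 6*l^3, (-1)*(l^2), (-1)*(9*l^2), 0, 0, (-2)*(3*l), (-2)*(1);
     4*l^4, (-1)*(6*l^3), 0, (-1)*(l^2), 9*l^2, 0, (2)*(3*l), 0, (-2)*(1);
     4*l^4, 0, (-1)*(6*l^3), (-1)*(l^2), (-1)*(9*l^2), 0, 0, (2)*(3*l), (-2)*(1);
     4*l^4, 6*l^3, 6*l^3, (2)*(l^2), 0, 9*l^2, 3*l, 3*l, 1;
     4*l^4, (-1)*(6*l^3), 6*l^3, (2)*(l^2), 0, (-1)*(9*l^2), (-1)*(3*l), 3*l, 1;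
     4*l^4, (-1)*(6*l^3), (-1)*(6*l^3), (2)*(l^2), 0, 9*l^2, (-1)*(3*l), (-1)*(3*l), 1;
     4*l^4, 6*l^3, (-1)*(6*l^3), (2)*(l^2), 0, (-1)*(9*l^2), 3*l, (-1)*(3*l), 1]

set_option maxHeartbeats 8000000 in
lemma Md_mul_Nm (l : ℝ) : Md l * Nm l = (36*l^4) • 1 := by
  ext i j
  fin_cases i <;> fin_cases j <;>
    · simp [Md, Nm, Matrix.mul_apply, Fin.sum_univ_nine, Matrix.smul_apply, Matrix.one_apply,
        -Matrix.vecCons_const]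
      try ring

lemma Md_inv_eq (l : ℝ) (hl : l ≠ 0) : (Md l)⁻¹ = (36*l^4)⁻¹ • Nm l := by
  have hc : (36*l^4 : ℝ) ≠ 0 := mul_ne_zero (by norm_num) (pow_ne_zero _ hl)
  refine Matrix.inv_eq_right_inv ?_
  rw [Matrix.mul_smul, Md_mul_Nm, smul_smul, inv_mul_cancel₀ hc, one_smul]

set_option maxHeartbeats 8000000 in
theorem Kpv_order_zero_solution (l a b se sx sq sd ρ₀ Jx0 : ℝ) (hl : l ≠ 0) :
    ∀ jy : ℝ,
      (Kpv l a b se sx sq sd).mulVec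
          (![ρ₀, Jx0, jy, a*l^2*ρ₀, 0, 0, -l^2*Jx0, -l^2*jy, b*l^4*ρ₀])
        = (Md l).mulVec
          (![0, 0, (-a - 2*b + 4)*ρ₀/18, 0, 0, Jx0/(6*l), -Jx0/(6*l), 0, 0]) := by
  intro jy
  have hC : (Cfl l a b se sx sq sd).mulVec
      (![ρ₀, Jx0, jy, a*l^2*ρ₀, 0, 0, -l^2*Jx0, -l^2*jy, b*l^4*ρ₀])
      = ![ρ₀, Jx0, jy, a*l^2*ρ₀, 0, 0, -l^2*Jx0, -l^2*jy, b*l^4*ρ₀] := by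
    funext i
    fin_cases i <;>
      · simp [Cfl, Matrix.mulVec, dotProduct, Fin.sum_univ_nine, -Matrix.vecCons_const]
        try ring
  have hf : ((36*l^4)⁻¹ • Nm l).mulVec
        (![ρ₀, Jx0, jy, a*l^2*ρ₀, 0, 0, -l^2*Jx0, -l^2*jy, b*l^4*ρ₀])
      = ![(1/9:ℝ)*ρ₀ + (-1/9:ℝ)*a*ρ₀ + (1/9:ℝ)*b*ρ₀,
  (1/9:ℝ)*ρ₀ + (-1/36:ℝ)*a*ρ₀ + (-1/18:ℝ)*b*ρ₀ + (1/3:ℝ)*Jx0/l,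
  (1/9:ℝ)*ρ₀ + (-1/36:ℝ)*a*ρ₀ + (-1/18:ℝ)*b*ρ₀ + (1/3:ℝ)*jy/l,
  (1/9:ℝ)*ρ₀ + (-1/36:ℝ)*a*ρ₀ + (-1/18:ℝ)*b*ρ₀ + (-1/3:ℝ)*Jx0/l,
  (1/9:ℝ)*ρ₀ + (-1/36:ℝ)*a*ρ₀ + (-1/18:ℝ)*b*ρ₀ + (-1/3:ℝ)*jy/l,
  (1/9:ℝ)*ρ₀ + (1/18:ℝ)*a*ρ₀ + (1/36:ℝ)*b*ρ₀ + (1/12:ℝ)*Jx0/l + (1/12:ℝ)*jy/l,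
  (1/9:ℝ)*ρ₀ + (1/18:ℝ)*a*ρ₀ + (1/36:ℝ)*b*ρ₀ + (-1/12:ℝ)*Jx0/l + (1/12:ℝ)*jy/l,
  (1/9:ℝ)*ρ₀ + (1/18:ℝ)*a*ρ₀ + (1/36:ℝ)*b*ρ₀ + (-1/12:ℝ)*Jx0/l + (-1/12:ℝ)*jy/l,
  (1/9:ℝ)*ρ₀ + (1/18:ℝ)*a*ρ₀ + (1/36:ℝ)*b*ρ₀ + (1/12:ℝ)*Jx0/l + (-1/12:ℝ)*jy/l] := by
    funext i
    fin_cases i <;>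
      · simp [Nm, Matrix.mulVec, dotProduct, Fin.sum_univ_nine, Matrix.smul_apply,
          -Matrix.vecCons_const]
        field_simp
        ring
  have hg : (Tpv + Ub).mulVec (![(1/9:ℝ)*ρ₀ + (-1/9:ℝ)*a*ρ₀ + (1/9:ℝ)*b*ρ₀,
  (1/9:ℝ)*ρ₀ + (-1/36:ℝ)*a*ρ₀ + (-1/18:ℝ)*b*ρ₀ + (1/3:ℝ)*Jx0/l,
  (1/9:ℝ)*ρ₀ + (-1/36:ℝ)*a*ρ₀ + (-1/18:ℝ)*b*ρ₀ + (1/3:ℝ)*jy/l,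
  (1/9:ℝ)*ρ₀ + (-1/36:ℝ)*a*ρ₀ + (-1/18:ℝ)*b*ρ₀ + (-1/3:ℝ)*Jx0/l,
  (1/9:ℝ)*ρ₀ + (-1/36:ℝ)*a*ρ₀ + (-1/18:ℝ)*b*ρ₀ + (-1/3:ℝ)*jy/l,
  (1/9:ℝ)*ρ₀ + (1/18:ℝ)*a*ρ₀ + (1/36:ℝ)*b*ρ₀ + (1/12:ℝ)*Jx0/l + (1/12:ℝ)*jy/l,
  (1/9:ℝ)*ρ₀ + (1/18:ℝ)*a*ρ₀ + (1/36:ℝ)*b*ρ₀ + (-1/12:ℝ)*Jx0/l + (1/12:ℝ)*jy/l,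
  (1/9:ℝ)*ρ₀ + (1/18:ℝ)*a*ρ₀ + (1/36:ℝ)*b*ρ₀ + (-1/12:ℝ)*Jx0/l + (-1/12:ℝ)*jy/l,
  (1/9:ℝ)*ρ₀ + (1/18:ℝ)*a*ρ₀ + (1/36:ℝ)*b*ρ₀ + (1/12:ℝ)*Jx0/l + (-1/12:ℝ)*jy/l])
      = ![(1/9:ℝ)*ρ₀ + (-1/9:ℝ)*a*ρ₀ + (1/9:ℝ)*b*ρ₀,
  (1/9:ℝ)*ρ₀ + (-1/36:ℝ)*a*ρ₀ + (-1/18:ℝ)*b*ρ₀ + (1/3:ℝ)*Jx0/l,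
  (-1/9:ℝ)*ρ₀ + (1/36:ℝ)*a*ρ₀ + (1/18:ℝ)*b*ρ₀ + (1/3:ℝ)*jy/l,
  (1/9:ℝ)*ρ₀ + (-1/36:ℝ)*a*ρ₀ + (-1/18:ℝ)*b*ρ₀ + (-1/3:ℝ)*Jx0/l,
  (1/9:ℝ)*ρ₀ + (-1/36:ℝ)*a*ρ₀ + (-1/18:ℝ)*b*ρ₀ + (-1/3:ℝ)*jy/l,
  (1/9:ℝ)*ρ₀ + (1/18:ℝ)*a*ρ₀ + (1/36:ℝ)*b*ρ₀ + (-1/12:ℝ)*Jx0/l + (1/12:ℝ)*jy/l,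
  (1/9:ℝ)*ρ₀ + (1/18:ℝ)*a*ρ₀ + (1/36:ℝ)*b*ρ₀ + (1/12:ℝ)*Jx0/l + (1/12:ℝ)*jy/l,
  (1/9:ℝ)*ρ₀ + (1/18:ℝ)*a*ρ₀ + (1/36:ℝ)*b*ρ₀ + (-1/12:ℝ)*Jx0/l + (-1/12:ℝ)*jy/l,
  (1/9:ℝ)*ρ₀ + (1/18:ℝ)*a*ρ₀ + (1/36:ℝ)*b*ρ₀ + (1/12:ℝ)*Jx0/l + (-1/12:ℝ)*jy/l] := by
    funext i
    fin_cases i <;>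
      · simp [Tpv, Ub, Matrix.add_apply, Matrix.mulVec, dotProduct, Fin.sum_univ_nine,
          -Matrix.vecCons_const]
        try ring
  rw [Kpv, Md_inv_eq l hl, Matrix.sub_mulVec, Matrix.one_mulVec,
    ← Matrix.mulVec_mulVec, ← Matrix.mulVec_mulVec, ← Matrix.mulVec_mulVec,
    hC, hf, hg]
  funext i
  fin_cases i <;>
    · simp [Md, Matrix.mulVec, dotProduct, Fin.sum_univ_nine, Pi.sub_apply, -Matrix.vecCons_const]
      field_simp
      ring
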